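/- Let a, b be coprime positive integers and i ∈ ℕ such that (a+b) divides (i+1). Then the set I(a,b,i) = {c ∈ ℕ : a ∤ (c+1), b ∤ (c+1), ⌊c/a⌋ + ⌊c/b⌋ = i} is empty. -/
import Mathlib


/-- The set `I(a,b,i)` indexing the first kind of basis elements of `HH^{-2i}`. -/
def Iset (a b i : ℕ) : Set ℕ :=
  {c | ¬ a ∣ (c + 1) ∧ ¬ b ∣ (c + 1) ∧ c / a + c / b = i}

/-- For coprime positive `a, b`, if `(a+b) ∣ (i+1)` then `I(a,b,i)` is empty. -/
theorem stmt9 (a b : ℕ) (ha : 0 < a) (hb : 0 < b) (hab : Nat.Coprime a b) (i : ℕ)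
    (h : (a + b) ∣ (i + 1)) : Iset a b i = ∅ := by
  rw [Set.eq_empty_iff_forall_notMem]
  rintro c ⟨h1, h2, h3⟩
  obtain ⟨k, hk⟩ := h
  set q1 := (c + 1) / a with hq1
  set q2 := (c + 1) / b with hq2
  set r := (c + 1) % a with hr
  set s := (c + 1) % b with hs
  have hda : c / a = q1 := by
    rw [hq1, Nat.succ_div, if_neg h1]; omega
  have hdb : c / b = q2 := by
    rw [hq2, Nat.succ_div, if_neg h2]; omega
  have e1 : a * q1 + r = c + 1 := Nat.div_add_mod _ _
  have e2 : b * q2 + s = c + 1 := Nat.div_add_mod _ _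
  have hr0 : 0 < r := Nat.pos_of_ne_zero (fun h0 => h1 (Nat.dvd_of_mod_eq_zero h0))
  have hs0 : 0 < s := Nat.pos_of_ne_zero (fun h0 => h2 (Nat.dvd_of_mod_eq_zero h0))
  have hra : r < a := Nat.mod_lt _ ha
  have hsb : s < b := Nat.mod_lt _ hb
  have hsum : (q1 : ℤ) + q2 + 1 = (a + b) * k := by
    have : q1 + q2 + 1 = (a + b) * k := by omega
    exact_mod_cast this
  have e1' : (a : ℤ) * q1 + r = c + 1 := by exact_mod_cast e1
  have e2' : (b : ℤ) * q2 + s = c + 1 := by exact_mod_cast e2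
  have hd : ((a : ℤ) + b) ∣ ((s : ℤ) + a - r) :=
    ⟨(a : ℤ) * k - q2, by linear_combination e2' - e1' + (a : ℤ) * hsum⟩
  have hpos : (0 : ℤ) < (s : ℤ) + a - r := by
    have : (r : ℤ) < a := by exact_mod_cast hra
    have : (0 : ℤ) < s := by exact_mod_cast hs0
    omega
  have hle := Int.le_of_dvd hpos hd
  have hsb' : (s : ℤ) < b := by exact_mod_cast hsb
  have hr0' : (0 : ℤ) < r := by exact_mod_cast hr0
  omega
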